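/- Let F ⊕ A =_ae 𝕋^d be a measurable tiling of the d-torus by a finite set F ⊂ ℝ^d with 0 ∈ F and a measurable set A ⊂ 𝕋^d. Then there exists a natural number q such that, up to sets of measure zero, ⋃_{f ∈ F ∩ ℚ^d} (f + A) = ⋂_{f ∈ F \ ℚ^d} A_f, where for each f ∈ F \ ℚ^d, A_f is a measurable subset of 𝕋^d which is invariant under translation by qf and satisfies 0 < μ(A_f) < 1. -/

import Mathlib

open MeasureTheory

/-- The `d`-torus `𝕋^d = ℝ^d/ℤ^d`. -/
abbrev Torus (d : ℕ) := Fin d → AddCircle (1 : ℝ)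

/-- The projection `ℝ^d → 𝕋^d`. -/
noncomputable def toTorus {d : ℕ} (v : Fin d → ℝ) : Torus d := fun i => (v i : AddCircle (1 : ℝ))

/-- A vector of `ℝ^d` is rational if all its coordinates are rational. -/
def IsRationalVec {d : ℕ} (f : Fin d → ℝ) : Prop := ∀ j, ∃ r : ℚ, f j = (r : ℝ)

open scoped Classical
noncomputable section

variable {d : ℕ}

-- ℝ → AddCircle coercion commutes with nsmul
lemma coe_nsmul_circle (n : ℕ) (x : ℝ) :
    ((n • x : ℝ) : AddCircle (1:ℝ)) = n • (x : AddCircle (1:ℝ)) := by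
  induction n with
  | zero => simp
  | succ k ih => rw [succ_nsmul, succ_nsmul, ← ih]; rfl

lemma toTorus_nsmul (n : ℕ) (v : Fin d → ℝ) :
    toTorus ((n : ℝ) • v) = n • toTorus v := by
  funext i
  show (((n:ℝ) • v) i : AddCircle (1:ℝ)) = n • ((v i : AddCircle (1:ℝ)))
  rw [← coe_nsmul_circle]
  congr 1
  simp [nsmul_eq_mul]

lemma toTorus_add (v w : Fin d → ℝ) : toTorus (v + w) = toTorus v + toTorus w := rfl

lemma toTorus_mul_smul (p m : ℕ) (v : Fin d → ℝ) :
    p • toTorus ((m : ℝ) • v) = toTorus (((p * m : ℕ) : ℝ) • v) := by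
  rw [← toTorus_nsmul]
  congr 1
  rw [smul_smul]
  
  push_cast
  ring_nf

abbrev RR (p d : ℕ) := AddMonoidAlgebra (ZMod p) (Torus d)

instance (p : ℕ) [Fact (Nat.Prime p)] : CharP (RR p d) p :=
  charP_of_injective_ringHom (f := AddMonoidAlgebra.singleZeroRingHom)
    (fun a b h => by simpa using AddMonoidAlgebra.single_right_injective (m := (0 : Torus d)) h) p

variable (p : ℕ) [Fact (Nat.Prime p)] (A : Set (Torus d))

def indZ (x γ : Torus d) : ZMod p := if x - γ ∈ A then 1 else 0

def Ev (x : Torus d) : RR p d →+ ZMod p :=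
  (Finsupp.liftAddHom (fun γ => AddMonoidHom.mulRight (indZ p A x γ))).comp
    AddMonoidAlgebra.coeffAddEquiv.toAddMonoidHom

lemma Ev_single (x γ : Torus d) (b : ZMod p) :
    Ev p A x (AddMonoidAlgebra.single γ b) = b * indZ p A x γ :=
  Finsupp.liftAddHom_apply_single _ _ _

lemma Ev_apply (x : Torus d) (ψ : RR p d) :
    Ev p A x ψ = ψ.coeff.sum fun γ b => b * indZ p A x γ := rfl

lemma indZ_shift (x γ0 a : Torus d) : indZ p A x (a + γ0) = indZ p A (x - γ0) a := by
  unfold indZ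
  rw [show x - (a + γ0) = x - γ0 - a by rw [sub_sub, add_comm]]

lemma Ev_mul_single (x γ0 : Torus d) (ψ : RR p d) :
    Ev p A x (ψ * AddMonoidAlgebra.single γ0 1) = Ev p A (x - γ0) ψ := by
  rw [AddMonoidAlgebra.mul_def]
  have h1 : ∀ a : Torus d, ∀ b : ZMod p,
      (Finsupp.sum (AddMonoidAlgebra.single γ0 (1:ZMod p)).coeff
        fun a₂ b₂ => AddMonoidAlgebra.single (a + a₂) (b * b₂)) =
      AddMonoidAlgebra.single (a + γ0) b := by
    intro a b
    rw [AddMonoidAlgebra.coeff_single, Finsupp.sum_single_index] <;> simp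
  simp only [h1]
  rw [map_finsuppSum]
  rw [Ev_apply]
  apply Finsupp.sum_congr
  intro a ha
  rw [Ev_single, indZ_shift]

/-- the number of `f ∈ F` such that `x` belongs to the `r`-dilated translate `r•f + A`. -/
def cnt (F : Finset (Fin d → ℝ)) (r : ℕ) (x : Torus d) : ℕ :=
  (F.filter (fun f => x - toTorus ((r:ℝ) • f) ∈ A)).card

def Phi (F : Finset (Fin d → ℝ)) (m : ℕ) : RR p d :=
  ∑ f ∈ F, AddMonoidAlgebra.single (toTorus ((m:ℝ) • f)) (1 : ZMod p)

lemma Ev_Phi (F : Finset (Fin d → ℝ)) (m : ℕ) (x : Torus d) :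
    Ev p A x (Phi p F m) = (cnt A F m x : ZMod p) := by
  unfold Phi cnt
  rw [map_sum]
  simp only [Ev_single, one_mul, indZ]
  rw [Finset.sum_boole]

lemma Phi_pow (F : Finset (Fin d → ℝ)) (m : ℕ) :
    (Phi p F m) ^ p = Phi p F (p * m) := by
  unfold Phi
  rw [sum_pow_char]
  refine Finset.sum_congr rfl fun f _ => ?_
  rw [AddMonoidAlgebra.single_pow, one_pow, toTorus_mul_smul]
end

noncomputable section
open Filter

variable {d : ℕ}

lemma torus_prob : IsProbabilityMeasure (volume : Measure (Torus d)) := by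
  constructor
  rw [MeasureTheory.volume_pi, Measure.pi_univ]
  simp [AddCircle.measure_univ]

lemma mp_add (c : Torus d) :
    MeasurePreserving (fun x : Torus d => x + c) volume volume :=
  measurePreserving_add_right volume c

lemma mp_sub (c : Torus d) :
    MeasurePreserving (fun x : Torus d => x - c) volume volume := by
  simpa [sub_eq_add_neg] using measurePreserving_add_right (volume : Measure (Torus d)) (-c)

lemma ae_sub {P : Torus d → Prop} (h : ∀ᵐ x, P x) (c : Torus d) :
    ∀ᵐ x, P (x - c) := by
  have : {x : Torus d | ¬ P (x - c)} = (fun x : Torus d => x - c) ⁻¹' {y | ¬ P y} := rfl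
  rw [MeasureTheory.ae_iff] at h ⊢
  rw [this]
  exact (mp_sub c).quasiMeasurePreserving.preimage_null h

lemma ae_add {P : Torus d → Prop} (h : ∀ᵐ x, P x) (c : Torus d) :
    ∀ᵐ x, P (x + c) := by
  have : {x : Torus d | ¬ P (x + c)} = (fun x : Torus d => x + c) ⁻¹' {y | ¬ P y} := rfl
  rw [MeasureTheory.ae_iff] at h ⊢
  rw [this]
  exact (mp_add c).quasiMeasurePreserving.preimage_null h

variable (p : ℕ) [Fact (Nat.Prime p)] (A : Set (Torus d))

lemma ae_Ev_pow (F : Finset (Fin d → ℝ)) (m : ℕ)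
    (h : ∀ᵐ x, cnt A F m x = 1) :
    ∀ n : ℕ, ∀ᵐ x, Ev p A x ((Phi p F m) ^ (n+1)) = (F.card : ZMod p) ^ n := by
  intro n
  induction n with
  | zero =>
    filter_upwards [h] with x hx
    rw [pow_one, pow_zero, Ev_Phi, hx, Nat.cast_one]
  | succ n ih =>
    have hall : ∀ᵐ x : Torus d, ∀ f ∈ (F : Set (Fin d → ℝ)),
        Ev p A (x - toTorus ((m:ℝ) • f)) ((Phi p F m) ^ (n+1)) = (F.card : ZMod p) ^ n := by
      exact (MeasureTheory.ae_ball_iff F.countable_toSet).mpr (fun f _ => ae_sub ih _)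
    filter_upwards [hall] with x hx
    rw [pow_succ]
    have hPhi2 : (Phi p F m ^ (n+1)) * Phi p F m
        = ∑ f ∈ F, (Phi p F m ^ (n+1)) * AddMonoidAlgebra.single (toTorus ((m:ℝ) • f)) 1 := by
      rw [← Finset.mul_sum]; rfl
    rw [hPhi2, map_sum]
    rw [Finset.sum_congr rfl fun f hf =>
      (Ev_mul_single p A x _ _).trans (hx f (Finset.mem_coe.mpr hf))]
    rw [Finset.sum_const, nsmul_eq_mul, pow_succ]
    ring

lemma dilation_step (F : Finset (Fin d → ℝ)) (hF : 0 < F.card) (hcard : F.card < p) (m : ℕ)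
    (h : ∀ᵐ x, cnt A F m x = 1) :
    ∀ᵐ x, cnt A F (p * m) x = 1 := by
  have hp := (Fact.out : Nat.Prime p)
  have key := ae_Ev_pow p A F m h (p - 1)
  rw [Nat.sub_add_cancel hp.one_le] at key
  have hcast : ((F.card : ZMod p)) ≠ 0 := by
    rw [Ne, ZMod.natCast_eq_zero_iff]
    intro hdvd
    exact absurd (Nat.le_of_dvd hF hdvd) (not_le.mpr hcard)
  filter_upwards [key] with x hx
  rw [Phi_pow, Ev_Phi, ZMod.pow_card_sub_one_eq_one hcast] at hx
  have hlt : cnt A F (p*m) x < p :=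
    lt_of_le_of_lt (Finset.card_filter_le _ _) hcard
  have h1 : (1 : ZMod p) = ((1:ℕ) : ZMod p) := by norm_cast
  rw [h1] at hx
  have := congrArg ZMod.val hx
  rwa [ZMod.val_cast_of_lt hlt, ZMod.val_cast_of_lt hp.one_lt] at this

lemma dilation (F : Finset (Fin d → ℝ)) (hF : 0 < F.card) (A : Set (Torus d))
    (h1 : ∀ᵐ x, cnt A F 1 x = 1) :
    ∀ r : ℕ, 0 < r → (∀ pp : ℕ, pp.Prime → pp ∣ r → F.card < pp) →
    ∀ᵐ x, cnt A F r x = 1 := by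
  intro r
  induction r using Nat.strong_induction_on with
  | _ r IH =>
    intro hr hfac
    rcases eq_or_lt_of_le (Nat.one_le_iff_ne_zero.mpr hr.ne') with he | hgt
    · rwa [← he]
    · set q := r.minFac with hq
      have hqp : q.Prime := Nat.minFac_prime (by omega)
      haveI : Fact (Nat.Prime q) := ⟨hqp⟩
      have hdvd : q ∣ r := Nat.minFac_dvd r
      have hm : r / q < r := Nat.div_lt_self hr hqp.one_lt
      have hmpos : 0 < r / q := Nat.div_pos (Nat.le_of_dvd hr hdvd) hqp.pos
      have hmfac : ∀ pp : ℕ, pp.Prime → pp ∣ r / q → F.card < pp := fun pp hpp hppd =>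
        hfac pp hpp (hppd.trans (Nat.div_dvd_of_dvd hdvd))
      have hrec := IH (r / q) hm hmpos hmfac
      have := dilation_step q A F hF (hfac q hqp hdvd) (r / q) hrec
      rwa [Nat.mul_div_cancel' hdvd] at this
end

noncomputable section
open Filter

variable {d : ℕ}

lemma toTorus_eq_zero_of_int (v : Fin d → ℝ) (h : ∀ j, ∃ z : ℤ, (z : ℝ) = v j) :
    toTorus v = 0 := by
  funext j
  obtain ⟨z, hz⟩ := h j
  show (v j : AddCircle (1:ℝ)) = 0
  rw [AddCircle.coe_eq_zero_iff]
  exact ⟨z, by rw [← hz]; simp⟩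

lemma rational_integerizer (f : Fin d → ℝ) (hf : IsRationalVec f) :
    ∃ n : ℕ, 0 < n ∧ toTorus ((n : ℝ) • f) = 0 := by
  choose r hr using hf
  refine ⟨∏ j : Fin d, (r j).den, Finset.prod_pos (fun j _ => (r j).pos), ?_⟩
  apply toTorus_eq_zero_of_int
  intro j
  obtain ⟨k, hk⟩ := Finset.dvd_prod_of_mem (fun j => (r j).den) (Finset.mem_univ j)
  refine ⟨k * (r j).num, ?_⟩
  have hden : ((r j).den : ℝ) * (r j : ℝ) = ((r j).num : ℝ) := by
    rw [mul_comm]; exact_mod_cast congrArg (Rat.cast : ℚ → ℝ) (Rat.mul_den_eq_num (r j))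
  have hprod : (((∏ j : Fin d, (r j).den : ℕ) : ℝ)) = (k : ℝ) * ((r j).den : ℝ) := by
    rw [hk]; push_cast; ring
  simp only [Pi.smul_apply, smul_eq_mul, hprod, hr j]
  push_cast
  rw [mul_assoc, hden]

/-- `T^[n] y = y + n • c` for translation `T`. -/
lemma iterate_add_eq (c : Torus d) (n : ℕ) (y : Torus d) :
    (fun x : Torus d => x + c)^[n] y = y + n • c := by
  induction n with
  | zero => simp
  | succ k ih => rw [Function.iterate_succ_apply', ih, succ_nsmul, add_assoc]

lemma existsUnique_mem_iff {α : Type*} (s : Finset α) (P : α → Prop) :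
    (∃! a, a ∈ s ∧ P a) ↔ (s.filter P).card = 1 := by
  classical
  constructor
  · rintro ⟨a, ⟨has, hPa⟩, hu⟩
    have : s.filter P = {a} := by
      ext b
      simp only [Finset.mem_filter, Finset.mem_singleton]
      constructor
      · rintro ⟨hbs, hPb⟩; exact hu b ⟨hbs, hPb⟩
      · rintro rfl; exact ⟨has, hPa⟩
    rw [this, Finset.card_singleton]
  · intro h
    obtain ⟨a, ha⟩ := Finset.card_eq_one.mp h
    have haP : a ∈ s ∧ P a := by
      have : a ∈ s.filter P := ha ▸ Finset.mem_singleton_self a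
      exact ⟨(Finset.mem_filter.mp this).1, (Finset.mem_filter.mp this).2⟩
    refine ⟨a, haP, fun b hb => ?_⟩
    have : b ∈ s.filter P := Finset.mem_filter.mpr ⟨hb.1, hb.2⟩
    rw [ha] at this
    exact Finset.mem_singleton.mp this
end

open MeasureTheory Filter


/-- **Weak structure.**  Let `F ⊕ A =_ae 𝕋^d` be a measurable tiling of the `d`-torus by a
finite set `F ⊂ ℝ^d` with `0 ∈ F` and a measurable set `A`.  Then there is a natural number
`q > 0` such that, up to null sets,
`⋃_{f ∈ F ∩ ℚ^d} (f + A) = ⋂_{f ∈ F \ ℚ^d} A_f`, where each `A_f` is a measurable set,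
invariant under translation by `q • f` up to null sets, with `0 < μ(A_f) < 1`. -/
theorem torus_tiling_weak_structure {d : ℕ} (hd : 1 ≤ d)
    (F : Finset (Fin d → ℝ)) (h0 : (0 : Fin d → ℝ) ∈ F)
    (A : Set (Torus d)) (hA : MeasurableSet A)
    (htile : ∀ᵐ x ∂(volume : Measure (Torus d)), ∃! f, f ∈ F ∧ x - toTorus f ∈ A) :
    ∃ q : ℕ, 0 < q ∧ ∃ Af : (Fin d → ℝ) → Set (Torus d),
      (∀ f ∈ F, ¬ IsRationalVec f →
        MeasurableSet (Af f) ∧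
        {y : Torus d | y - toTorus ((q : ℝ) • f) ∈ Af f}
          =ᵐ[(volume : Measure (Torus d))] Af f ∧
        0 < volume (Af f) ∧ volume (Af f) < 1) ∧
      {y : Torus d | ∃ f ∈ F, IsRationalVec f ∧ y - toTorus f ∈ A}
        =ᵐ[(volume : Measure (Torus d))]
      {y : Torus d | ∀ f ∈ F, ¬ IsRationalVec f → y ∈ Af f} := by
  classical
  haveI : IsProbabilityMeasure (volume : Measure (Torus d)) := torus_prob
  have hFpos : 0 < F.card := Finset.card_pos.mpr ⟨0, h0⟩
  -- counting form of the tiling hypothesis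
  have hcnt1 : ∀ᵐ x : Torus d, cnt A F 1 x = 1 := by
    filter_upwards [htile] with x hx
    rw [cnt, ← existsUnique_mem_iff]
    simpa [one_smul] using hx
  -- choice of q
  have hnu : ∀ f : Fin d → ℝ, ∃ n : ℕ, 0 < n ∧ (IsRationalVec f → toTorus ((n:ℝ) • f) = 0) := by
    intro f
    by_cases hf : IsRationalVec f
    · obtain ⟨n, hn, h⟩ := rational_integerizer f hf
      exact ⟨n, hn, fun _ => h⟩
    · exact ⟨1, one_pos, fun h => absurd h hf⟩
  choose nu hnupos hnuzero using hnu
  set q : ℕ := F.card.factorial * ∏ f ∈ F, nu f with hq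
  have hqpos : 0 < q := Nat.mul_pos (Nat.factorial_pos _) (Finset.prod_pos fun f _ => hnupos f)
  have hqkill : ∀ f ∈ F, IsRationalVec f → toTorus ((q:ℝ) • f) = 0 := by
    intro f hf hrat
    obtain ⟨t, ht⟩ : nu f ∣ q := Dvd.dvd.mul_left (Finset.dvd_prod_of_mem nu hf) _
    rw [ht]
    rw [show ((nu f * t : ℕ):ℝ) • f = (t:ℝ) • ((nu f : ℝ) • f) by
      rw [smul_smul]; push_cast; ring_nf]
    rw [toTorus_nsmul, hnuzero f hrat, smul_zero]
  have hfacq : ∀ k : ℕ, ∀ pp : ℕ, pp.Prime → pp ∣ (1 + k * q) → F.card < pp := by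
    intro k pp hpp hdvd
    by_contra hle
    push_neg at hle
    have h1 : pp ∣ q := Dvd.dvd.mul_right (Nat.dvd_factorial hpp.pos hle) _
    have h2 : pp ∣ k * q := h1.mul_left k
    have : pp ∣ 1 := (Nat.dvd_add_right h2).mp (by rwa [add_comm] at hdvd)
    have := Nat.le_of_dvd one_pos this
    have := hpp.two_le
    omega
  -- dilated tilings
  have hdil : ∀ k : ℕ, ∀ᵐ x : Torus d, cnt A F (1 + k * q) x = 1 := fun k =>
    dilation F hFpos A hcnt1 _ (by omega) (hfacq k)
  -- pairwise a.e. disjointness of dilated translates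
  have hpair : ∀ k : ℕ, ∀ f ∈ F, ∀ f0 ∈ F, f ≠ f0 →
      (volume : Measure (Torus d)) {z : Torus d |
        z - toTorus (((1 + k * q : ℕ) : ℝ) • f) ∈ A ∧
        z - toTorus (((1 + k * q : ℕ) : ℝ) • f0) ∈ A} = 0 := by
    intro k f hf f0 hf0 hne
    have : ∀ᵐ z : Torus d, ¬ (z - toTorus (((1 + k * q : ℕ) : ℝ) • f) ∈ A ∧
        z - toTorus (((1 + k * q : ℕ) : ℝ) • f0) ∈ A) := by
      filter_upwards [hdil k] with z hz
      rintro ⟨h1, h2⟩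
      have hsubset : ({f, f0} : Finset (Fin d → ℝ)) ⊆
          F.filter (fun f' => z - toTorus (((1 + k * q : ℕ):ℝ) • f') ∈ A) := by
        intro a ha
        rcases Finset.mem_insert.mp ha with rfl | ha'
        · exact Finset.mem_filter.mpr ⟨hf, h1⟩
        · rw [Finset.mem_singleton.mp ha']
          exact Finset.mem_filter.mpr ⟨hf0, h2⟩
      have h2le : 2 ≤ cnt A F (1 + k * q) z := by
        rw [cnt]
        calc 2 = ({f, f0} : Finset (Fin d → ℝ)).card := (Finset.card_pair hne).symm
        _ ≤ _ := Finset.card_le_card hsubset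
      omega
    simpa only [MeasureTheory.ae_iff, not_not] using this
  -- translate identities
  have htrans : ∀ k : ℕ, ∀ f : Fin d → ℝ,
      toTorus (((1 + k * q : ℕ) : ℝ) • f) = toTorus f + k • toTorus ((q:ℝ) • f) := by
    intro k f
    have hsplit : ((1 + k * q : ℕ) : ℝ) • f = f + ((k * q : ℕ) : ℝ) • f := by
      push_cast
      rw [add_smul, one_smul]
    rw [hsplit, toTorus_add, ← toTorus_mul_smul]
  have htransrat : ∀ k : ℕ, ∀ f ∈ F, IsRationalVec f →
      toTorus (((1 + k * q : ℕ) : ℝ) • f) = toTorus f := by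
    intro k f hf hrat
    rw [htrans, hqkill f hf hrat, smul_zero, add_zero]
  -- the rational part U
  set U : Set (Torus d) := {y | ∃ f ∈ F, IsRationalVec f ∧ y - toTorus f ∈ A} with hU
  have hUmeas : MeasurableSet U := by
    have : U = ⋃ f ∈ (F : Set (Fin d → ℝ)),
        {y : Torus d | IsRationalVec f ∧ y - toTorus f ∈ A} := by
      ext y
      simp only [hU, Set.mem_setOf_eq, Set.mem_iUnion, Finset.mem_coe, exists_prop]
    rw [this]
    refine MeasurableSet.biUnion F.countable_toSet (fun f _ => ?_)
    by_cases hrat : IsRationalVec f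
    · simp only [hrat, true_and]
      exact (measurable_id.sub_const _) hA
    · simp only [hrat, false_and]
      exact MeasurableSet.empty
  -- the saturations
  set Af : (Fin d → ℝ) → Set (Torus d) := fun f =>
    {y | ∀ K : ℕ, ∃ k : ℕ, K ≤ k ∧ y + k • toTorus ((q:ℝ) • f) ∈ U} with hAf
  have hAfmeas : ∀ f, MeasurableSet (Af f) := by
    intro f
    have : Af f = ⋂ K : ℕ, ⋃ k : ℕ, ⋃ _ : K ≤ k,
        {y : Torus d | y + k • toTorus ((q:ℝ) • f) ∈ U} := by
      ext y
      simp only [hAf, Set.mem_setOf_eq, Set.mem_iInter, Set.mem_iUnion, exists_prop]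
    rw [this]
    exact MeasurableSet.iInter fun K => MeasurableSet.iUnion fun k =>
      MeasurableSet.iUnion fun _ => (measurable_id.add_const _) hUmeas
  -- exact invariance
  have hAfinv : ∀ f : Fin d → ℝ,
      {y : Torus d | y - toTorus ((q:ℝ) • f) ∈ Af f} = Af f := by
    intro f
    ext y
    set g := toTorus ((q:ℝ) • f) with hg
    simp only [hAf, Set.mem_setOf_eq]
    constructor
    · intro h K
      obtain ⟨k, hk, hmem⟩ := h (K + 1)
      refine ⟨k - 1, by omega, ?_⟩
      have hk1 : (k - 1) + 1 = k := by omega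
      have : y - g + k • g = y + (k - 1) • g := by
        rw [← hk1, succ_nsmul]
        abel
      rwa [this] at hmem
    · intro h K
      obtain ⟨k, hk, hmem⟩ := h K
      refine ⟨k + 1, by omega, ?_⟩
      have : y - g + (k + 1) • g = y + k • g := by
        rw [succ_nsmul]
        abel
      rwa [this]
  -- Poincaré recurrence : U is a.e. contained in each Af f
  have hUAf : ∀ f : Fin d → ℝ, ∀ᵐ y : Torus d, y ∈ U → y ∈ Af f := by
    intro f
    set g := toTorus ((q:ℝ) • f) with hg
    have hcons : MeasureTheory.Conservative (fun y : Torus d => y + g) volume :=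
      (mp_add g).conservative
    filter_upwards [hcons.ae_mem_imp_frequently_image_mem hUmeas.nullMeasurableSet]
      with y hy hyU
    intro K
    obtain ⟨k, hk, hmem⟩ := frequently_atTop.mp (hy hyU) K
    rw [iterate_add_eq] at hmem
    exact ⟨k, hk, hmem⟩
  -- the key null intersections: Af f0 avoids the tile f0 + A
  have hnullAfB : ∀ f0 ∈ F, ¬ IsRationalVec f0 →
      (volume : Measure (Torus d)) (Af f0 ∩ {y : Torus d | y - toTorus f0 ∈ A}) = 0 := by
    intro f0 hf0 hirr
    set g := toTorus ((q:ℝ) • f0) with hg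
    -- each k ≥ 1 and each rational f in F contributes a null set
    have hk1 : ∀ k : ℕ, ∀ f ∈ F, IsRationalVec f →
        (volume : Measure (Torus d)) {y : Torus d |
          (y + (k+1) • g) - toTorus f ∈ A ∧ y - toTorus f0 ∈ A} = 0 := by
      intro k f hf hrat
      have hne : f ≠ f0 := fun h => hirr (h ▸ hrat)
      have htgt := hpair (k+1) f hf f0 hf0 hne
      have hpre : {y : Torus d | (y + (k+1) • g) - toTorus f ∈ A ∧ y - toTorus f0 ∈ A}
          = (fun y : Torus d => y + (k+1) • g) ⁻¹' {z : Torus d |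
              z - toTorus (((1 + (k+1) * q : ℕ) : ℝ) • f) ∈ A ∧
              z - toTorus (((1 + (k+1) * q : ℕ) : ℝ) • f0) ∈ A} := by
        ext y
        simp only [Set.mem_setOf_eq, Set.mem_preimage]
        rw [htransrat (k+1) f hf hrat, htrans (k+1) f0, ← hg]
        constructor
        · rintro ⟨h1, h2⟩
          refine ⟨h1, ?_⟩
          have : y + (k+1) • g - (toTorus f0 + (k+1) • g) = y - toTorus f0 := by abel
          rwa [this]
        · rintro ⟨h1, h2⟩
          refine ⟨h1, ?_⟩
          have : y + (k+1) • g - (toTorus f0 + (k+1) • g) = y - toTorus f0 := by abel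
          rwa [this] at h2
      rw [hpre]
      exact (mp_add ((k+1) • g)).quasiMeasurePreserving.preimage_null htgt
    -- assemble
    have hsub : Af f0 ∩ {y : Torus d | y - toTorus f0 ∈ A} ⊆
        ⋃ k : ℕ, ⋃ f ∈ (F : Set (Fin d → ℝ)),
          {y : Torus d | IsRationalVec f ∧
            (y + (k+1) • g) - toTorus f ∈ A ∧ y - toTorus f0 ∈ A} := by
      rintro y ⟨hyAf, hyB⟩
      obtain ⟨k, hk, hmem⟩ := hyAf 1
      obtain ⟨f, hfF, hfrat, hfA⟩ := hmem
      have hk' : k = (k - 1) + 1 := by omega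
      refine Set.mem_iUnion.mpr ⟨k - 1, Set.mem_iUnion.mpr ⟨f, Set.mem_iUnion.mpr
        ⟨Finset.mem_coe.mpr hfF, ?_⟩⟩⟩
      exact ⟨hfrat, by rwa [← hk'], hyB⟩
    refine measure_mono_null hsub ?_
    rw [measure_iUnion_null_iff]
    intro k
    have : (⋃ f ∈ (F : Set (Fin d → ℝ)),
        {y : Torus d | IsRationalVec f ∧
          (y + (k+1) • g) - toTorus f ∈ A ∧ y - toTorus f0 ∈ A}) ≤
        ⋃ f ∈ (F : Set (Fin d → ℝ)),
          {y : Torus d | IsRationalVec f ∧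
            (y + (k+1) • g) - toTorus f ∈ A ∧ y - toTorus f0 ∈ A} := le_refl _
    refine (MeasureTheory.measure_biUnion_null_iff F.countable_toSet).mpr ?_
    intro f hfF
    by_cases hrat : IsRationalVec f
    · refine measure_mono_null (fun y hy => ?_) (hk1 k f (Finset.mem_coe.mp hfF) hrat)
      exact ⟨hy.2.1, hy.2.2⟩
    · have : {y : Torus d | IsRationalVec f ∧
          (y + (k+1) • g) - toTorus f ∈ A ∧ y - toTorus f0 ∈ A} = ∅ := by
        ext y
        simp [hrat]
      rw [this]
      exact measure_empty
  -- positivity of μ(A)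
  have hApos : 0 < (volume : Measure (Torus d)) A := by
    rcases (zero_le : 0 ≤ (volume : Measure (Torus d)) A).lt_or_eq with h | h
    · exact h
    · exfalso
      have hW : (volume : Measure (Torus d)) (⋃ f ∈ (F : Set (Fin d → ℝ)),
          {x : Torus d | x - toTorus f ∈ A}) = 0 := by
        refine (MeasureTheory.measure_biUnion_null_iff F.countable_toSet).mpr fun f _ => ?_
        have : {x : Torus d | x - toTorus f ∈ A} =
            (fun x : Torus d => x - toTorus f) ⁻¹' A := rfl
        rw [this]
        exact (mp_sub (toTorus f)).quasiMeasurePreserving.preimage_null h.symm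
      have hae : ∀ᵐ x : Torus d, x ∉ ⋃ f ∈ (F : Set (Fin d → ℝ)),
          {x : Torus d | x - toTorus f ∈ A} :=
        MeasureTheory.measure_eq_zero_iff_ae_notMem.mp hW
      have hfalse : ∀ᵐ x : Torus d, False := by
        filter_upwards [htile, hae] with x hx hnx
        obtain ⟨f, ⟨hfF, hfA⟩, _⟩ := hx
        exact hnx (Set.mem_iUnion.mpr ⟨f, Set.mem_iUnion.mpr ⟨Finset.mem_coe.mpr hfF, hfA⟩⟩)
      haveI : (MeasureTheory.ae (volume : Measure (Torus d))).NeBot :=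
        MeasureTheory.ae_neBot.mpr (IsProbabilityMeasure.ne_zero _)
      obtain ⟨x, hx⟩ := hfalse.exists
      exact hx
  -- A is contained in U (using 0 ∈ F)
  have hAU : A ⊆ U := by
    intro y hy
    refine ⟨0, h0, fun j => ⟨0, by simp⟩, ?_⟩
    have h00 : toTorus (0 : Fin d → ℝ) = 0 :=
      toTorus_eq_zero_of_int _ (fun j => ⟨0, by simp⟩)
    rwa [h00, sub_zero]
  -- measure bounds for Af
  have hAfpos : ∀ f : Fin d → ℝ, 0 < (volume : Measure (Torus d)) (Af f) := by
    intro f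
    have h1 : (volume : Measure (Torus d)) U ≤ volume (Af f) := measure_mono_ae (hUAf f)
    have h2 : (volume : Measure (Torus d)) A ≤ volume U := measure_mono hAU
    exact lt_of_lt_of_le hApos (le_trans h2 h1)
  have hAflt : ∀ f0 ∈ F, ¬ IsRationalVec f0 →
      (volume : Measure (Torus d)) (Af f0) < 1 := by
    intro f0 hf0 hirr
    set B : Set (Torus d) := {y : Torus d | y - toTorus f0 ∈ A} with hB
    have hBmeas : MeasurableSet B := (measurable_id.sub_const _) hA
    have hBvol : (volume : Measure (Torus d)) B = volume A :=
      (mp_sub (toTorus f0)).measure_preimage hA.nullMeasurableSet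
    have hsub : Af f0 ≤ᵐ[(volume : Measure (Torus d))] Bᶜ := by
      have := MeasureTheory.measure_eq_zero_iff_ae_notMem.mp (hnullAfB f0 hf0 hirr)
      filter_upwards [this] with y hy hyAf
      exact fun hyB => hy ⟨hyAf, hyB⟩
    calc (volume : Measure (Torus d)) (Af f0) ≤ volume Bᶜ := measure_mono_ae hsub
    _ = 1 - volume B := prob_compl_eq_one_sub hBmeas
    _ < 1 := by
        rw [hBvol]
        exact ENNReal.sub_lt_self ENNReal.one_ne_top one_ne_zero hApos.ne'
  -- the final a.e. identity
  have hfinal : U =ᵐ[(volume : Measure (Torus d))]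
      {y : Torus d | ∀ f ∈ F, ¬ IsRationalVec f → y ∈ Af f} := by
    rw [Filter.eventuallyEq_set]
    have hUAf' : ∀ᵐ y : Torus d, ∀ f ∈ (F : Set (Fin d → ℝ)), y ∈ U → y ∈ Af f :=
      (MeasureTheory.ae_ball_iff F.countable_toSet).mpr (fun f _ => hUAf f)
    have hnull' : ∀ᵐ y : Torus d, ∀ f ∈ (F : Set (Fin d → ℝ)),
        ¬ IsRationalVec f → ¬ (y ∈ Af f ∧ y - toTorus f ∈ A) := by
      refine (MeasureTheory.ae_ball_iff F.countable_toSet).mpr (fun f hfF => ?_)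
      by_cases hrat : IsRationalVec f
      · exact Filter.Eventually.of_forall (fun y h => absurd hrat h)
      · have := MeasureTheory.measure_eq_zero_iff_ae_notMem.mp
          (hnullAfB f (Finset.mem_coe.mp hfF) hrat)
        filter_upwards [this] with y hy _
        exact fun hc => hy ⟨hc.1, hc.2⟩
    filter_upwards [htile, hUAf', hnull'] with y hy1 hy2 hy3
    constructor
    · intro hyU f hfF hirr
      exact hy2 f (Finset.mem_coe.mpr hfF) hyU
    · intro hyR
      obtain ⟨fs, ⟨hfsF, hfsA⟩, _⟩ := hy1
      by_cases hrat : IsRationalVec fs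
      · exact ⟨fs, hfsF, hrat, hfsA⟩
      · exact absurd ⟨hyR fs hfsF hrat, hfsA⟩
          (hy3 fs (Finset.mem_coe.mpr hfsF) hrat)
  refine ⟨q, hqpos, Af, fun f hfF hirr => ⟨hAfmeas f, ?_, hAfpos f, hAflt f hfF hirr⟩, hfinal⟩
  rw [hAfinv f]
  exact Filter.EventuallyEq.rfl
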